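/- Conversely, given a smooth solution x of x''(t) + (x(t)+z₀+ρ)(x(t)²/2 + (z₀+ρ)x(t) + y₀ + 1) = ρ with x(0)=0, x'(0)=x₀, define y(t) = ∫₀ᵗ (x(s)²/2 + (z₀+ρ)x(s) + y₀) ds and z(t) = -(1/2)x(t)y(t) - (z₀+ρ)y(t) - x'(t) + x₀. Then (x,y,z) satisfies the full magnetic system x'' + (x+z₀+ρ)(y'+1) = ρ, y'' - (x+z₀+ρ)x' = 0, z' + (1/2)(x'y - x(y'+2)) = z₀ with the initial conditions x(0)=y(0)=z(0)=0, x'(0)=x₀, y'(0)=y₀, z'(0)=z₀. -/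

import Mathlib

/- Conversely, from a solution x of the single ODE, defining y and z by the
   stated formulas yields a solution of the full magnetic system on H₃ with
   the correct initial conditions. -/
theorem stmt_15 (x₀ y₀ z₀ ρ : ℝ) (x : ℝ → ℝ) (hx : ContDiff ℝ 2 x)
    (hx0 : x 0 = 0) (hx0' : deriv x 0 = x₀)
    (hode : ∀ t, deriv (deriv x) t
      + (x t + z₀ + ρ) * ((x t) ^ 2 / 2 + (z₀ + ρ) * x t + y₀ + 1) = ρ)
    (y z : ℝ → ℝ)
    (hy : ∀ t, y t = ∫ s in (0 : ℝ)..t, ((x s) ^ 2 / 2 + (z₀ + ρ) * x s + y₀))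
    (hz : ∀ t, z t = -(1 / 2) * x t * y t - (z₀ + ρ) * y t - deriv x t + x₀) :
    x 0 = 0 ∧ y 0 = 0 ∧ z 0 = 0 ∧
    deriv x 0 = x₀ ∧ deriv y 0 = y₀ ∧ deriv z 0 = z₀ ∧
    (∀ t, deriv (deriv x) t + (x t + z₀ + ρ) * (deriv y t + 1) = ρ) ∧
    (∀ t, deriv (deriv y) t - (x t + z₀ + ρ) * deriv x t = 0) ∧
    (∀ t, deriv z t + (1 / 2) * (deriv x t * y t - x t * (deriv y t + 2)) = z₀) := by
  set f : ℝ → ℝ := fun s => (x s) ^ 2 / 2 + (z₀ + ρ) * x s + y₀ with hf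
  have hxd : Differentiable ℝ x := hx.differentiable (by norm_num)
  have hx'd : Differentiable ℝ (deriv x) := by
    have h2 : ContDiff ℝ ((1 : ℕ∞) + 1) x := by exact_mod_cast hx
    exact ((contDiff_succ_iff_deriv.mp h2).2.2.differentiable (by simp))
  have hfc : Continuous f := by
    apply Continuous.add
    apply Continuous.add
    · exact (hxd.continuous.pow 2).div_const 2
    · exact continuous_const.mul hxd.continuous
    · exact continuous_const
  have hyeq : y = fun t => ∫ s in (0 : ℝ)..t, f s := funext hy
  have hyd : ∀ t, HasDerivAt y (f t) t := fun t => by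
    rw [hyeq]; exact (hfc.integral_hasStrictDerivAt 0 t).hasDerivAt
  have hy' : deriv y = f := funext fun t => (hyd t).deriv
  have hdf : ∀ t, HasDerivAt f ((x t + z₀ + ρ) * deriv x t) t := fun t => by
    have h := (hxd t).hasDerivAt
    have := (((h.pow 2).div_const 2).add (h.const_mul (z₀ + ρ))).add_const y₀
    refine this.congr_deriv ?_
    push_cast
    ring
  have hy0 : y 0 = 0 := by rw [hyeq]; simp
  have hz0 : z 0 = 0 := by rw [hz 0, hy0, hx0, hx0']; ring
  have hy'0 : deriv y 0 = y₀ := by rw [hy', hf]; simp [hx0]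
  -- equation 2
  have heq2 : ∀ t, deriv (deriv y) t - (x t + z₀ + ρ) * deriv x t = 0 := fun t => by
    rw [hy', (hdf t).deriv]; ring
  -- equation 1
  have heq1 : ∀ t, deriv (deriv x) t + (x t + z₀ + ρ) * (deriv y t + 1) = ρ := fun t => by
    have := hode t
    rw [hy', hf]
    linarith
  -- derivative of z
  have hzd : ∀ t, HasDerivAt z
      (-(1 / 2) * (deriv x t * y t + x t * f t) - (z₀ + ρ) * f t
        - deriv (deriv x) t) t := fun t => by
    have hzeq : z = fun t => -(1 / 2) * x t * y t - (z₀ + ρ) * y t - deriv x t + x₀ :=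
      funext hz
    rw [hzeq]
    have h1 := ((((hxd t).hasDerivAt.mul (hyd t)).const_mul (-(1/2))).sub
      ((hyd t).const_mul (z₀ + ρ))).sub (hx'd t).hasDerivAt
    have := h1.add_const x₀
    exact this.congr_of_eventuallyEq (Filter.Eventually.of_forall fun s => by
      simp only [Pi.sub_apply, Pi.mul_apply]; ring)
  have heq3 : ∀ t, deriv z t
      + (1 / 2) * (deriv x t * y t - x t * (deriv y t + 2)) = z₀ := fun t => by
    rw [(hzd t).deriv, hy']
    have hO := hode t
    simp only [hf]
    linear_combination -hO
  have hz'0 : deriv z 0 = z₀ := by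
    have := heq3 0
    rw [hy0, hx0, hy'0, hx0'] at this
    linarith
  exact ⟨hx0, hy0, hz0, hx0', hy'0, hz'0, heq1, heq2, heq3⟩
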